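/- Weak (1,1) bound for the discrete weighted maximal operator: If ω ∈ A₁(ℤ) and x ∈ l¹_ω(ℤ), then for every t > 0, ω({k ∈ ℤ : M_ω x(k) > t}) ≤ (C/t) Σ_{k∈ℤ} |x(k)| ω(k), where C depends only on ω. -/
import Mathlib


open Finset MeasureTheory
open scoped Classical

noncomputable section

/-- The symmetric interval `S_{m,N} = {k : |k - m| ≤ N}` as a finite set. -/
def Sint (m : ℤ) (N : ℕ) : Finset ℤ := Finset.Icc (m - N) (m + N)

/-- `w(S) = Σ_{k ∈ S} w(k)`. -/
def wSum (w : ℤ → ℝ) (s : Finset ℤ) : ℝ := ∑ k ∈ s, w k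

/-- Discrete weighted Morrey norm `‖x‖_{l^p_q(w,v)}`. -/
def morreyNorm (p q : ℝ) (w v : ℤ → ℝ) (x : ℤ → ℝ) : ℝ :=
  ⨆ mN : ℤ × ℕ, (wSum v (Sint mN.1 mN.2)) ^ (1/q - 1/p) *
    (∑ k ∈ Sint mN.1 mN.2, |x k| ^ p * w k) ^ (1/p)

/-- The discrete Muckenhoupt class `A₁(ℤ)`. -/
def discreteA1 (w : ℤ → ℝ) : Prop :=
  ∃ C : ℝ, ∀ a b : ℤ, (hab : a ≤ b) →
    ((Finset.Icc a b).card : ℝ)⁻¹ * (∑ k ∈ Finset.Icc a b, w k) ≤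
      C * (Finset.Icc a b).inf' (Finset.nonempty_Icc.mpr hab) w

/-- The discrete Muckenhoupt class `A_p(ℤ)` for `1 < p < ∞`. -/
def discreteAp (p : ℝ) (w : ℤ → ℝ) : Prop :=
  ∃ C : ℝ, ∀ a b : ℤ, a ≤ b →
    (((Finset.Icc a b).card : ℝ)⁻¹ * ∑ k ∈ Finset.Icc a b, w k) *
      (((Finset.Icc a b).card : ℝ)⁻¹ *
        ∑ k ∈ Finset.Icc a b, (w k) ^ (-(p-1)⁻¹)) ^ (p-1) ≤ C

/-- The discrete weighted Hardy–Littlewood maximal operator `M_w`. -/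
def maxW (w x : ℤ → ℝ) (m : ℤ) : ℝ :=
  ⨆ N : ℕ, (wSum w (Sint m N))⁻¹ * ∑ k ∈ Sint m N, |x k| * w k

/-- The discrete (unweighted) Hardy–Littlewood maximal operator `M`. -/
def maxHL (x : ℤ → ℝ) (m : ℤ) : ℝ :=
  ⨆ N : ℕ, ((2 * N + 1 : ℕ) : ℝ)⁻¹ * ∑ k ∈ Sint m N, |x k|

lemma Sint_nonempty (m : ℤ) (N : ℕ) : (Sint m N).Nonempty :=
  Finset.nonempty_Icc.mpr (by omega)

lemma mem_Sint {m k : ℤ} {N : ℕ} : k ∈ Sint m N ↔ m - N ≤ k ∧ k ≤ m + N := by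
  simp [Sint, Finset.mem_Icc]

lemma wSum_pos {w : ℤ → ℝ} (hw : ∀ k, 0 < w k) (m : ℤ) (N : ℕ) :
    0 < wSum w (Sint m N) :=
  Finset.sum_pos (fun k _ => hw k) (Sint_nonempty m N)

lemma geom {m g : ℤ} {N N' : ℕ} (hN : N ≤ N')
    (h : ¬ Disjoint (Sint m N) (Sint g N')) : m ∈ Sint g (2 * N') := by
  obtain ⟨k, hk1, hk2⟩ := Finset.not_disjoint_iff.mp h
  rw [mem_Sint] at *
  push_cast
  omega

def Sintsum (x w : ℤ → ℝ) (g : ℤ) (N : ℕ) : ℝ := ∑ k ∈ Sint g N, |x k| * w k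

lemma sum_biUnion_le_of_nonneg {f : ℤ → ℝ} (hf : ∀ k, 0 ≤ f k)
    (G : Finset ℤ) (t : ℤ → Finset ℤ) :
    ∑ k ∈ G.biUnion t, f k ≤ ∑ g ∈ G, ∑ k ∈ t g, f k := by
  classical
  induction G using Finset.induction_on with
  | empty => simp
  | @insert a s ha ih =>
    rw [Finset.biUnion_insert, Finset.sum_insert ha]
    have h := Finset.sum_union_inter (s₁ := t a) (s₂ := s.biUnion t) (f := f)
    have hnn : 0 ≤ ∑ k ∈ (t a ∩ s.biUnion t), f k :=
      Finset.sum_nonneg fun k _ => hf k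
    linarith [ih]

lemma selection (Nf : ℤ → ℕ) :
    ∀ n : ℕ, ∀ F : Finset ℤ, F.card ≤ n →
      ∃ G ⊆ F,
        (∀ g₁ ∈ G, ∀ g₂ ∈ G, g₁ ≠ g₂ →
          Disjoint (Sint g₁ (Nf g₁)) (Sint g₂ (Nf g₂))) ∧
        ∀ m ∈ F, ∃ g ∈ G, Nf m ≤ Nf g ∧
          ¬ Disjoint (Sint m (Nf m)) (Sint g (Nf g)) := by
  intro n
  induction n with
  | zero =>
    intro F hF
    have : F = ∅ := Finset.card_eq_zero.mp (Nat.le_antisymm hF (Nat.zero_le _))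
    subst this
    exact ⟨∅, Finset.Subset.refl _, by simp, by simp⟩
  | succ n ih =>
    intro F hF
    rcases F.eq_empty_or_nonempty with rfl | hne
    · exact ⟨∅, Finset.Subset.refl _, by simp, by simp⟩
    obtain ⟨g, hgF, hgmax⟩ := F.exists_max_image Nf hne
    set F' := F.filter (fun m => Disjoint (Sint m (Nf m)) (Sint g (Nf g))) with hF'def
    have hgF' : g ∉ F' := by
      intro h
      have h2 := (Finset.mem_filter.mp h).2
      have h3 : Sint g (Nf g) = ⊥ := Disjoint.eq_bot_of_self h2
      exact (Sint_nonempty g (Nf g)).ne_empty (by simpa using h3)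
    have hsub' : F' ⊆ F.erase g := by
      intro m hm
      exact Finset.mem_erase.mpr ⟨fun h => hgF' (h ▸ hm), (Finset.mem_filter.mp hm).1⟩
    have hcard : F'.card ≤ n := by
      have h1 := Finset.card_le_card hsub'
      have h2 := Finset.card_erase_of_mem hgF
      omega
    obtain ⟨G', hG'sub, hdis, hcov⟩ := ih F' hcard
    refine ⟨insert g G', ?_, ?_, ?_⟩
    · intro m hm
      rcases Finset.mem_insert.mp hm with rfl | hm'
      · exact hgF
      · exact (Finset.mem_filter.mp (hG'sub hm')).1
    · intro g₁ hg₁ g₂ hg₂ hne12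
      rcases Finset.mem_insert.mp hg₁ with rfl | hg₁' <;>
        rcases Finset.mem_insert.mp hg₂ with rfl | hg₂'
      · exact absurd rfl hne12
      · exact ((Finset.mem_filter.mp (hG'sub hg₂')).2).symm
      · exact (Finset.mem_filter.mp (hG'sub hg₁')).2
      · exact hdis g₁ hg₁' g₂ hg₂' hne12
    · intro m hm
      by_cases hd : Disjoint (Sint m (Nf m)) (Sint g (Nf g))
      · obtain ⟨g', hg', hle, hnd⟩ := hcov m (Finset.mem_filter.mpr ⟨hm, hd⟩)
        exact ⟨g', Finset.mem_insert_of_mem hg', hle, hnd⟩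
      · exact ⟨g, Finset.mem_insert_self _ _, hgmax m hm, hd⟩

lemma doubling {w : ℤ → ℝ} (hw : ∀ k, 0 < w k) {C0 : ℝ}
    (hC0 : ∀ a b : ℤ, (hab : a ≤ b) →
      ((Finset.Icc a b).card : ℝ)⁻¹ * (∑ k ∈ Finset.Icc a b, w k) ≤
        C0 * (Finset.Icc a b).inf' (Finset.nonempty_Icc.mpr hab) w)
    (hC1 : 1 ≤ C0) (g : ℤ) (N : ℕ) :
    wSum w (Sint g (2 * N)) ≤ 2 * C0 * wSum w (Sint g N) := by
  have hab : g - ((2 * N : ℕ) : ℤ) ≤ g + ((2 * N : ℕ) : ℤ) := by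
    have : (0:ℤ) ≤ ((2 * N : ℕ) : ℤ) := Int.natCast_nonneg _
    omega
  have hA := hC0 _ _ hab
  set J := Finset.Icc (g - ((2 * N : ℕ) : ℤ)) (g + ((2 * N : ℕ) : ℤ)) with hJ
  have hcard : (J.card : ℝ) = 4 * N + 1 := by
    rw [hJ, Int.card_Icc]
    have h5 : (g + ((2 * N : ℕ) : ℤ) + 1 - (g - ((2 * N : ℕ) : ℤ))) = ((4 * N + 1 : ℕ) : ℤ) := by
      push_cast; ring
    rw [h5, Int.toNat_natCast]
    push_cast; ring
  set I := J.inf' (Finset.nonempty_Icc.mpr hab) w with hI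
  obtain ⟨k₀, hk₀, hk₀eq⟩ := Finset.exists_mem_eq_inf' (Finset.nonempty_Icc.mpr hab) w
  have hIpos : 0 < I := by rw [hI, hk₀eq]; exact hw k₀
  have hBig : wSum w (Sint g (2 * N)) ≤ C0 * (4 * N + 1) * I := by
    have hc : (0:ℝ) < (J.card : ℝ) := by rw [hcard]; positivity
    rw [inv_mul_le_iff₀ hc] at hA
    calc wSum w (Sint g (2 * N)) = ∑ k ∈ J, w k := by rw [wSum, Sint, hJ]
      _ ≤ (J.card : ℝ) * (C0 * I) := hA
      _ = C0 * (4 * N + 1) * I := by rw [hcard]; ring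
  have hSmall : (2 * N + 1 : ℝ) * I ≤ wSum w (Sint g N) := by
    have hsub : Sint g N ⊆ J := by
      intro k hk; rw [mem_Sint] at hk
      rw [hJ, Finset.mem_Icc]; push_cast at hk ⊢; omega
    have hle : ∀ k ∈ Sint g N, I ≤ w k := fun k hk =>
      Finset.inf'_le w (hsub hk)
    have hc2 : (Sint g N).card = 2 * N + 1 := by
      rw [Sint, Int.card_Icc]
      have h6 : (g + (N : ℤ) + 1 - (g - (N : ℤ))) = ((2 * N + 1 : ℕ) : ℤ) := by
        push_cast; ring
      rw [h6, Int.toNat_natCast]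
    calc (2 * N + 1 : ℝ) * I = ∑ _k ∈ Sint g N, I := by
          rw [Finset.sum_const, hc2, nsmul_eq_mul]; push_cast; ring
      _ ≤ wSum w (Sint g N) := Finset.sum_le_sum hle
  nlinarith [wSum_pos hw g N, hIpos]

/-- weak `(1,1)` bound for the discrete weighted maximal operator. -/
theorem stmt13 (w : ℤ → ℝ) (hw : ∀ k, 0 < w k) (hA1 : discreteA1 w) :
    ∃ C > 0, ∀ x : ℤ → ℝ, Summable (fun k : ℤ => |x k| * w k) →
      ∀ t : ℝ, 0 < t →
        ∑' k : {k : ℤ // t < maxW w x k}, w k ≤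
          (C / t) * ∑' k : ℤ, |x k| * w k := by
  obtain ⟨C0, hC0⟩ := hA1
  have hC1 : 1 ≤ C0 := by
    have h := hC0 0 0 le_rfl
    simp only [Finset.Icc_self, Finset.card_singleton, Nat.cast_one, inv_one,
      Finset.sum_singleton, Finset.inf'_singleton, one_mul] at h
    have h0 := hw 0
    nlinarith
  refine ⟨2 * C0, by linarith, ?_⟩
  intro x hsum t ht
  have hT0 : 0 ≤ ∑' k : ℤ, |x k| * w k :=
    tsum_nonneg fun k => mul_nonneg (abs_nonneg _) (hw k).le
  have key : ∀ F : Finset ℤ, (∀ m ∈ F, t < maxW w x m) →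
      ∑ m ∈ F, w m ≤ (2 * C0 / t) * ∑' k : ℤ, |x k| * w k := by
    intro F hF
    have hNex : ∀ m ∈ F, ∃ N : ℕ,
        t * wSum w (Sint m N) < ∑ k ∈ Sint m N, |x k| * w k := by
      intro m hm
      obtain ⟨N, hN⟩ := exists_lt_of_lt_ciSup (hF m hm)
      refine ⟨N, ?_⟩
      have hp := wSum_pos hw m N
      rw [lt_inv_mul_iff₀ hp] at hN
      rw [mul_comm]
      exact hN
    set Nf : ℤ → ℕ := fun m =>
      if h : ∃ N : ℕ, t * wSum w (Sint m N) < ∑ k ∈ Sint m N, |x k| * w k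
      then h.choose else 0 with hNfdef
    have hNfspec : ∀ m ∈ F,
        t * wSum w (Sint m (Nf m)) < ∑ k ∈ Sint m (Nf m), |x k| * w k := by
      intro m hm
      have h := hNex m hm
      simp only [hNfdef, dif_pos h]
      exact h.choose_spec
    obtain ⟨G, hGsub, hdis, hcov⟩ := selection Nf F.card F le_rfl
    have hGF : ∀ g ∈ G, g ∈ F := fun g hg => hGsub hg
    have hFsub : F ⊆ G.biUnion fun g => Sint g (2 * Nf g) := by
      intro m hm
      obtain ⟨g, hg, hle, hnd⟩ := hcov m hm
      exact Finset.mem_biUnion.mpr ⟨g, hg, geom hle hnd⟩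
    have h1 : ∑ m ∈ F, w m ≤ ∑ k ∈ G.biUnion (fun g => Sint g (2 * Nf g)), w k :=
      Finset.sum_le_sum_of_subset_of_nonneg hFsub (fun k _ _ => (hw k).le)
    have h2 : ∑ k ∈ G.biUnion (fun g => Sint g (2 * Nf g)), w k ≤
        ∑ g ∈ G, wSum w (Sint g (2 * Nf g)) := by
      have := sum_biUnion_le_of_nonneg (fun k => (hw k).le) G (fun g => Sint g (2 * Nf g))
      simpa [wSum] using this
    have h3 : ∀ g ∈ G, wSum w (Sint g (2 * Nf g)) ≤
        2 * C0 * (t⁻¹ * Sintsum x w g (Nf g)) := by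
      intro g hg
      have hd := doubling hw hC0 hC1 g (Nf g)
      have hspec := hNfspec g (hGF g hg)
      have hws : wSum w (Sint g (Nf g)) ≤ t⁻¹ * Sintsum x w g (Nf g) := by
        rw [le_inv_mul_iff₀ ht]
        exact hspec.le
      calc wSum w (Sint g (2 * Nf g)) ≤ 2 * C0 * wSum w (Sint g (Nf g)) := hd
        _ ≤ 2 * C0 * (t⁻¹ * Sintsum x w g (Nf g)) := by
            apply mul_le_mul_of_nonneg_left hws; linarith
    have h4 : ∑ g ∈ G, Sintsum x w g (Nf g) ≤ ∑' k : ℤ, |x k| * w k := by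
      have hdisj : (↑G : Set ℤ).PairwiseDisjoint (fun g => Sint g (Nf g)) := by
        intro a ha b hb hab
        exact hdis a ha b hb hab
      have heq : ∑ g ∈ G, Sintsum x w g (Nf g) =
          ∑ k ∈ G.biUnion (fun g => Sint g (Nf g)), |x k| * w k :=
        (Finset.sum_biUnion hdisj).symm
      rw [heq]
      exact Summable.sum_le_tsum _ (fun k _ => mul_nonneg (abs_nonneg _) (hw k).le) hsum
    calc ∑ m ∈ F, w m ≤ ∑ g ∈ G, wSum w (Sint g (2 * Nf g)) := h1.trans h2
      _ ≤ ∑ g ∈ G, 2 * C0 * (t⁻¹ * Sintsum x w g (Nf g)) := Finset.sum_le_sum h3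
      _ = (2 * C0 / t) * ∑ g ∈ G, Sintsum x w g (Nf g) := by
          rw [Finset.mul_sum]; apply Finset.sum_congr rfl; intro g _
          rw [div_eq_mul_inv]; ring
      _ ≤ (2 * C0 / t) * ∑' k : ℤ, |x k| * w k := by
          apply mul_le_mul_of_nonneg_left h4
          positivity
  by_cases hs : Summable (fun k : {k : ℤ // t < maxW w x k} => w k.val)
  · refine Summable.tsum_le_of_sum_le hs ?_
    intro s
    have himg : ∑ i ∈ s, w i.val = ∑ m ∈ s.image Subtype.val, w m := by
      rw [Finset.sum_image]
      intro a _ b _ hab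
      exact Subtype.ext hab
    rw [himg]
    apply key
    intro m hm
    obtain ⟨⟨m', hm'⟩, _, rfl⟩ := Finset.mem_image.mp hm
    exact hm'
  · rw [tsum_eq_zero_of_not_summable hs]
    positivity
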